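/- Let F : [-1,1] → ℝ be continuous, differentiable on (-1,1), satisfying F(η) ≥ L|η| for all η ∈ (-1,1) and F(1) ≥ L, where L > 0. Suppose F attains a minimum value μ = F(η₀) < L at some interior point η₀ ∈ (-1,1). Then ∫₀¹ F(η) dη > μ + (L-μ)²/(2L). -/

import Mathlib

open Set intervalIntegral

theorem integral_gt_of_min_lt (L : ℝ) (hL : 0 < L) (F : ℝ → ℝ)
    (hFc : ContinuousOn F (Icc (-1) 1))
    (hFd : DifferentiableOn ℝ F (Ioo (-1) 1))
    (hFlow : ∀ η ∈ Ioo (-1 : ℝ) 1, L * |η| ≤ F η)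
    (hF1 : L ≤ F 1)
    (η₀ : ℝ) (hη₀ : η₀ ∈ Ioo (-1 : ℝ) 1)
    (hmin : ∀ η ∈ Icc (-1 : ℝ) 1, F η₀ ≤ F η)
    (hμ : F η₀ < L) :
    F η₀ + (L - F η₀) ^ 2 / (2 * L) < ∫ η in (0 : ℝ)..1, F η := by
  set μ := F η₀ with hμdef
  have hμ0 : 0 ≤ μ := le_trans (by positivity) (hFlow η₀ hη₀)
  set c : ℝ := μ / L with hcdef
  have hLc : L * c = μ := by rw [hcdef]; field_simp
  have hc0 : 0 ≤ c := div_nonneg hμ0 hL.le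
  have hc1 : c < 1 := (div_lt_one hL).2 hμ
  have hcI : c ∈ Ioo (-1 : ℝ) 1 := ⟨by linarith, hc1⟩
  set G : ℝ → ℝ := fun η => max μ (L * η) with hGdef
  have hGc : Continuous G := continuous_const.max (continuous_const.mul continuous_id)
  -- value of ∫ G
  have hint1 : (∫ η in (0 : ℝ)..c, G η) = μ * c := by
    rw [intervalIntegral.integral_congr (g := fun _ => μ)]
    · simp [mul_comm]
    · intro x hx
      rw [uIcc_of_le hc0] at hx
      have : L * x ≤ μ := by
        calc L * x ≤ L * c := by nlinarith [hx.2]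
        _ = μ := hLc
      simp [hGdef, max_eq_left this]
  have hint2 : (∫ η in c..1, G η) = L * (1 - c ^ 2) / 2 := by
    rw [intervalIntegral.integral_congr (g := fun x => L * x)]
    · rw [intervalIntegral.integral_const_mul, integral_id]
      ring
    · intro x hx
      rw [uIcc_of_le hc1.le] at hx
      have : μ ≤ L * x := by
        calc μ = L * c := hLc.symm
        _ ≤ L * x := by nlinarith [hx.1]
      simp [hGdef, max_eq_right this]
  have hGint : (∫ η in (0 : ℝ)..1, G η) = μ + (L - μ) ^ 2 / (2 * L) := by
    rw [← intervalIntegral.integral_add_adjacent_intervals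
      (b := c) ((hGc.intervalIntegrable _ _)) ((hGc.intervalIntegrable _ _)),
      hint1, hint2]
    have hLne : L ≠ 0 := hL.ne'
    field_simp [hcdef]
    linear_combination (μ - L * c) * hLc
  -- F ≥ G on Ioc 0 1
  have hle : ∀ x ∈ Ioc (0 : ℝ) 1, G x ≤ F x := by
    intro x hx
    refine max_le (hmin x ⟨by linarith [hx.1], hx.2⟩) ?_
    rcases eq_or_lt_of_le hx.2 with h | h
    · subst h; simpa using hF1
    · have := hFlow x ⟨by linarith [hx.1], h⟩
      rwa [abs_of_pos hx.1] at this
  -- strict somewhere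
  have hlt : ∃ x ∈ Icc (0 : ℝ) 1, G x < F x := by
    by_contra hcon
    push_neg at hcon
    have heq : ∀ x ∈ Ioo (0 : ℝ) 1, F x = G x := fun x hx =>
      le_antisymm (hcon x ⟨hx.1.le, hx.2.le⟩) (hle x ⟨hx.1, hx.2.le⟩)
    -- F c = μ
    have hGxval : ∀ x ∈ Ioo (0 : ℝ) 1, c ≤ x → F x = L * x := by
      intro x hx hcx
      rw [heq x hx, hGdef]
      exact max_eq_right (by calc μ = L * c := hLc.symm
        _ ≤ L * x := by nlinarith)
    have hFc0 : F c = μ := by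
      have hne : (Filter.NeBot (nhdsWithin c (Ioo c 1))) := by
        exact left_nhdsWithin_Ioo_neBot hc1
      have h1 : Filter.Tendsto F (nhdsWithin c (Ioo c 1)) (nhds (F c)) := by
        have := (hFc c ⟨by linarith, by linarith⟩)
        exact this.tendsto.mono_left (nhdsWithin_mono c (fun x hx =>
          ⟨by linarith [hx.1], hx.2.le⟩))
      have h2 : Filter.Tendsto F (nhdsWithin c (Ioo c 1)) (nhds μ) := by
        have : Filter.Tendsto (fun x => L * x) (nhdsWithin c (Ioo c 1)) (nhds (L * c)) :=
          ((continuous_const.mul continuous_id).tendsto c).mono_left nhdsWithin_le_nhds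
        rw [hLc] at this
        refine this.congr' ?_
        filter_upwards [self_mem_nhdsWithin] with x hx
        exact (hGxval x ⟨lt_of_le_of_lt hc0 hx.1, hx.2⟩ hx.1.le).symm
      exact tendsto_nhds_unique h1 h2
    have hIoomem : Ioo (-1 : ℝ) 1 ∈ nhds c := Ioo_mem_nhds hcI.1 hcI.2
    have hdF : DifferentiableAt ℝ F c := hFd.differentiableAt hIoomem
    -- local min of F at c
    have hmin1 : IsLocalMin F c := by
      filter_upwards [hIoomem] with x hx
      rw [hFc0]
      exact hmin x ⟨hx.1.le, hx.2.le⟩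
    have hderiv0 : deriv F c = 0 := hmin1.deriv_eq_zero
    -- local min of F x - L x at c
    have hmin2 : IsLocalMin (fun x => F x - L * x) c := by
      filter_upwards [hIoomem] with x hx
      have h1 : L * x ≤ L * |x| := by
        have := le_abs_self x; nlinarith
      have := hFlow x hx
      simp only [hFc0, hLc]
      linarith
    have : deriv (fun x => F x - L * x) c = 0 := hmin2.deriv_eq_zero
    have hder : HasDerivAt (fun x => F x - L * x) (deriv F c - L * 1) c :=
      hdF.hasDerivAt.sub ((hasDerivAt_id c).const_mul L)
    rw [hder.deriv, hderiv0] at this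
    exact hL.ne' (by linarith)
  have := intervalIntegral.integral_lt_integral_of_continuousOn_of_le_of_exists_lt
    one_pos (hGc.continuousOn) (hFc.mono (by intro x hx; constructor <;> [linarith [hx.1]; exact hx.2]))
    hle hlt
  rwa [hGint] at this
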